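/- For every permutation π ∈ S_n, F(L(P_π), q) = F(Λ_π, q); that is, the generating function of linear extensions of the inversion poset of π by number of inversions equals the rank generating function of the weak order interval [id, π]. -/

import Mathlib

open Polynomial

namespace SepPerm

/-- The length (number of inversions) of a permutation of `Fin n`. -/
def invCount {n : ℕ} (π : Equiv.Perm (Fin n)) : ℕ :=
  (Finset.univ.filter fun p : Fin n × Fin n => p.1 < p.2 ∧ π p.2 < π p.1).card

/-- The (right) weak Bruhat order: `u ≤ v` iff `ℓ(u) + ℓ(u⁻¹v) = ℓ(v)`. -/
def wle {n : ℕ} (u v : Equiv.Perm (Fin n)) : Prop :=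
  invCount u + invCount (u⁻¹ * v) = invCount v

open scoped Classical in
/-- `F(Λ_π, q) = ∑_{u ≤ π} q^{ℓ(u)}`, rank generating function of `[id, π]`. -/
noncomputable def FLam {n : ℕ} (π : Equiv.Perm (Fin n)) : Polynomial ℤ :=
  ∑ u ∈ Finset.univ.filter (fun u => wle u π), X ^ invCount u

open scoped Classical in
/-- `F(V_π, q) = ∑_{v ≥ π} q^{ℓ(v) - ℓ(π)}`, rank generating function of `[π, w₀]`. -/
noncomputable def FV {n : ℕ} (π : Equiv.Perm (Fin n)) : Polynomial ℤ :=
  ∑ v ∈ Finset.univ.filter (fun v => wle π v), X ^ (invCount v - invCount π)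

/-- A permutation is separable iff it avoids the patterns 3142 and 2413. -/
def IsSeparable {n : ℕ} (π : Equiv.Perm (Fin n)) : Prop :=
  (¬ ∃ i j k h : Fin n, i < j ∧ j < k ∧ k < h ∧
      π j < π h ∧ π h < π i ∧ π i < π k) ∧
  (¬ ∃ i j k h : Fin n, i < j ∧ j < k ∧ k < h ∧
      π k < π i ∧ π i < π h ∧ π h < π j)

/-- The longest element `w₀ = n, n-1, …, 1`. -/
def w0 (n : ℕ) : Equiv.Perm (Fin n) := Fin.revPerm

/-- The complement `π^c`, with `π^c(i) = n + 1 - π(i)` (one-indexed). -/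
def compl {n : ℕ} (π : Equiv.Perm (Fin n)) : Equiv.Perm (Fin n) := w0 n * π

/-- `[k] = 1 + q + ⋯ + q^{k-1}`. -/
noncomputable def qnum (k : ℕ) : Polynomial ℤ := ∑ i ∈ Finset.range k, X ^ i

/-- `[N]! = [1][2]⋯[N]`. -/
noncomputable def qfact (N : ℕ) : Polynomial ℤ := ∏ k ∈ Finset.range N, qnum (k + 1)

/-- The inversion poset `P_π` on the letters: `x ≤_P y` iff `x ≤ y` and `π⁻¹x ≤ π⁻¹y`. -/
def invLe {n : ℕ} (π : Equiv.Perm (Fin n)) (x y : Fin n) : Prop :=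
  x ≤ y ∧ π⁻¹ x ≤ π⁻¹ y

/-- `σ` is a linear extension of the order `r`: whenever `i <_r j`, `i` precedes `j`
in the one-line notation of `σ` (i.e. the position `σ⁻¹ i` comes before `σ⁻¹ j`). -/
def IsLinExt {N : ℕ} (r : Fin N → Fin N → Prop) (σ : Equiv.Perm (Fin N)) : Prop :=
  ∀ i j, r i j → i ≠ j → σ.symm i < σ.symm j

open scoped Classical in
/-- `F(𝓛(P), q) = ∑_{σ ∈ 𝓛(P)} q^{ℓ(σ)}`, generating function of linear extensions
by number of inversions. -/
noncomputable def FLin {N : ℕ} (r : Fin N → Fin N → Prop) : Polynomial ℤ :=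
  ∑ σ ∈ Finset.univ.filter (fun σ => IsLinExt r σ), X ^ invCount σ

/-- value-inversion set -/
def Dset {n : ℕ} (w : Equiv.Perm (Fin n)) : Finset (Fin n × Fin n) :=
  Finset.univ.filter fun p : Fin n × Fin n => p.1 < p.2 ∧ w⁻¹ p.2 < w⁻¹ p.1

lemma mem_Dset {n : ℕ} {w : Equiv.Perm (Fin n)} {p : Fin n × Fin n} :
    p ∈ Dset w ↔ p.1 < p.2 ∧ w⁻¹ p.2 < w⁻¹ p.1 := by
  simp [Dset]

lemma invCount_eq_card_Dset {n : ℕ} (w : Equiv.Perm (Fin n)) :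
    invCount w = (Dset w).card := by
  unfold invCount
  apply Finset.card_bij (fun p _ => (w p.2, w p.1))
  · intro p hp
    simp only [Finset.mem_filter, Finset.mem_univ, true_and] at hp
    simp [mem_Dset, hp.1, hp.2]
  · intro p hp q hq h
    simp only [Prod.mk.injEq, EmbeddingLike.apply_eq_iff_eq] at h
    exact Prod.ext h.2 h.1
  · intro q hq
    rw [mem_Dset] at hq
    refine ⟨(w⁻¹ q.2, w⁻¹ q.1), ?_, ?_⟩
    · simp [hq.1, hq.2]; exact hq.2
    · simp

lemma invCount_mul {n : ℕ} (u v : Equiv.Perm (Fin n)) :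
    invCount (u⁻¹ * v) = (symmDiff (Dset u) (Dset v)).card := by
  unfold invCount
  apply Finset.card_bij
    (fun p _ => if v p.1 < v p.2 then (v p.1, v p.2) else (v p.2, v p.1))
  · intro p hp
    rw [Finset.mem_filter] at hp; simp only [Finset.mem_filter, Finset.mem_univ, true_and, Equiv.Perm.mul_apply] at hp
    obtain ⟨h1, h2⟩ := hp
    have hne : v p.1 ≠ v p.2 := by
      intro h; rw [h] at h2; exact lt_irrefl _ h2
    rw [Finset.mem_symmDiff]
    split_ifs with hlt
    · left
      constructor
      · rw [mem_Dset]; exact ⟨hlt, h2⟩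
      · rw [mem_Dset]; push_neg
        intro _
        simp only [Equiv.Perm.coe_inv, Equiv.symm_apply_apply]
        exact le_of_lt h1
    · right
      have hlt' : v p.2 < v p.1 := lt_of_le_of_ne (not_lt.mp hlt) (Ne.symm hne)
      constructor
      · rw [mem_Dset]
        refine ⟨hlt', ?_⟩
        simp only [Equiv.Perm.coe_inv, Equiv.symm_apply_apply]
        exact h1
      · rw [mem_Dset]; push_neg
        intro _
        exact le_of_lt h2
  · intro p hp q hq h
    rw [Finset.mem_filter] at hp hq; simp only [Finset.mem_filter, Finset.mem_univ, true_and, Equiv.Perm.mul_apply] at hp hq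
    have inj := v.injective
    split_ifs at h with h1 h2 h2 <;>
      simp only [Prod.mk.injEq] at h
    · exact Prod.ext (inj h.1) (inj h.2)
    · -- v p.1 = v q.2, v p.2 = v q.1
      have e1 : p.1 = q.2 := inj h.1
      have e2 : p.2 = q.1 := inj h.2
      exfalso
      rw [e1, e2] at hp
      exact lt_asymm hp.2 hq.2
    · have e1 : p.2 = q.1 := inj h.1
      have e2 : p.1 = q.2 := inj h.2
      exfalso
      rw [e1, e2] at hp
      exact lt_asymm hp.2 hq.2
    · exact Prod.ext (inj h.2) (inj h.1)
  · intro q hq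
    rw [Finset.mem_symmDiff] at hq
    rcases hq with ⟨hu, hv⟩ | ⟨hv, hu⟩
    · rw [mem_Dset] at hu hv
      push_neg at hv
      obtain ⟨hlt, hiu⟩ := hu
      have hvne : v⁻¹ q.1 ≠ v⁻¹ q.2 := fun h => (ne_of_lt hlt) (v⁻¹.injective h)
      have hiv : v⁻¹ q.1 < v⁻¹ q.2 := lt_of_le_of_ne (hv hlt) hvne
      refine ⟨(v⁻¹ q.1, v⁻¹ q.2), ?_, ?_⟩
      · rw [Finset.mem_filter]; simp only [Finset.mem_filter, Finset.mem_univ, true_and, Equiv.Perm.mul_apply,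
          Equiv.Perm.coe_inv, Equiv.apply_symm_apply]
        exact ⟨hiv, hiu⟩
      · simp [hlt]
    · rw [mem_Dset] at hu hv
      push_neg at hu
      obtain ⟨hlt, hiv⟩ := hv
      have hune : u⁻¹ q.1 ≠ u⁻¹ q.2 := fun h => (ne_of_lt hlt) (u⁻¹.injective h)
      have hiu : u⁻¹ q.1 < u⁻¹ q.2 := lt_of_le_of_ne (hu hlt) hune
      refine ⟨(v⁻¹ q.2, v⁻¹ q.1), ?_, ?_⟩
      · rw [Finset.mem_filter]; simp only [Finset.mem_filter, Finset.mem_univ, true_and, Equiv.Perm.mul_apply,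
          Equiv.Perm.coe_inv, Equiv.apply_symm_apply]
        exact ⟨hiv, hiu⟩
      · have : ¬ (q.2 < q.1) := not_lt.mpr (le_of_lt hlt)
        simp [Equiv.Perm.coe_inv, Equiv.apply_symm_apply, this]

lemma card_symmDiff_eq {α : Type*} [DecidableEq α] (A B : Finset α) :
    A.card + (symmDiff A B).card = B.card ↔ A ⊆ B := by
  have hsd : (symmDiff A B).card = (A \ B).card + (B \ A).card := by
    rw [symmDiff_def]
    exact Finset.card_union_of_disjoint disjoint_sdiff_sdiff
  have h1 : (A \ B).card + (A ∩ B).card = A.card := Finset.card_sdiff_add_card_inter A B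
  have h2 : (B \ A).card + (B ∩ A).card = B.card := Finset.card_sdiff_add_card_inter B A
  have h3 : (A ∩ B).card = (B ∩ A).card := by rw [Finset.inter_comm]
  constructor
  · intro h
    have h0 : (A \ B).card = 0 := by omega
    rw [Finset.card_eq_zero, Finset.sdiff_eq_empty_iff_subset] at h0
    exact h0
  · intro h
    have h0 : (A \ B).card = 0 := by
      rw [Finset.card_eq_zero, Finset.sdiff_eq_empty_iff_subset]; exact h
    rw [hsd]
    omega

lemma wle_iff_Dset_subset {n : ℕ} (u v : Equiv.Perm (Fin n)) :
    wle u v ↔ Dset u ⊆ Dset v := by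
  unfold wle
  rw [invCount_eq_card_Dset u, invCount_eq_card_Dset v, invCount_mul]
  exact card_symmDiff_eq _ _

lemma isLinExt_iff_wle {n : ℕ} (π σ : Equiv.Perm (Fin n)) :
    IsLinExt (invLe π) σ ↔ wle σ π := by
  rw [wle_iff_Dset_subset]
  constructor
  · intro h p hp
    rw [mem_Dset] at hp ⊢
    obtain ⟨hlt, hs⟩ := hp
    refine ⟨hlt, ?_⟩
    by_contra hcon
    push_neg at hcon
    have := h p.1 p.2 ⟨le_of_lt hlt, hcon⟩ (ne_of_lt hlt)
    rw [← Equiv.Perm.inv_def] at this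
    exact lt_asymm hs this
  · intro h i j hr hne
    obtain ⟨hle, hplt⟩ := hr
    have hlt : i < j := lt_of_le_of_ne hle hne
    rw [← Equiv.Perm.inv_def]
    by_contra hcon
    push_neg at hcon
    have hne' : σ⁻¹ i ≠ σ⁻¹ j := fun he => hne (σ⁻¹.injective he)
    have hs : σ⁻¹ j < σ⁻¹ i := lt_of_le_of_ne hcon (Ne.symm hne')
    have := h (mem_Dset.mpr ⟨hlt, hs⟩ : (i, j) ∈ Dset σ)
    rw [mem_Dset] at this
    exact absurd this.2 (not_lt.mpr hplt)

/-- For every `π ∈ S_n`, the generating function of the linear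
extensions of the inversion poset `P_π` by number of inversions equals the rank
generating function of the weak order interval `[id, π]`:
`F(𝓛(P_π), q) = F(Λ_π, q)`. -/
theorem FLin_invLe_eq_FLam (n : ℕ) (π : Equiv.Perm (Fin n)) :
    FLin (invLe π) = FLam π := by
  classical
  unfold FLin FLam
  apply Finset.sum_congr _ (fun _ _ => rfl)
  ext σ
  simp only [Finset.mem_filter, Finset.mem_univ, true_and]
  exact isLinExt_iff_wle π σ


end SepPerm
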